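/- Let S⁻, S⁺ be independent with H(S⁻) = c₁·H(𝒮), H(S⁺) = c₂·H(𝒮), and suppose random variables X⁻, X* satisfy: H(S⁻ | X*) = 0, H(S⁻, S⁺ | X⁻, X*) = 0, and H(X⁻ | S⁻) ≤ (d' − c₁)·H(𝒮). Then H(X*) ≥ (c₁ + c₂ − (d' − c₁))·H(𝒮) = (2c₁ + c₂ − d')·H(𝒮). -/

import Mathlib

open Finset

/-- Shannon entropy of a finite-valued random variable. -/
noncomputable def entH {Ω α : Type*} [Fintype Ω] [Fintype α] [DecidableEq α]
    (p : Ω → ℝ) (X : Ω → α) : ℝ :=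
  -∑ a : α, (∑ ω ∈ Finset.univ.filter fun ω => X ω = a, p ω) *
      Real.log (∑ ω ∈ Finset.univ.filter fun ω => X ω = a, p ω)

/-- Conditional Shannon entropy `H(X | Y) = H(X, Y) − H(Y)`. -/
noncomputable def condH {Ω α β : Type*} [Fintype Ω] [Fintype α] [Fintype β]
    [DecidableEq α] [DecidableEq β] (p : Ω → ℝ) (X : Ω → α) (Y : Ω → β) : ℝ :=
  entH p (fun ω => (X ω, Y ω)) - entH p Y

/-- Independence of the pair `(X, Y)`. -/
def Indep2 {Ω α β : Type*} [Fintype Ω] [DecidableEq α] [DecidableEq β]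
    (p : Ω → ℝ) (X : Ω → α) (Y : Ω → β) : Prop :=
  ∀ (a : α) (b : β),
    (∑ ω ∈ Finset.univ.filter fun ω => X ω = a ∧ Y ω = b, p ω) =
      (∑ ω ∈ Finset.univ.filter fun ω => X ω = a, p ω) *
      (∑ ω ∈ Finset.univ.filter fun ω => Y ω = b, p ω)

/-! ### Auxiliary machinery -/

/-- The probability mass of the event `X = a`. -/
noncomputable def pr {Ω α : Type*} [Fintype Ω] [DecidableEq α]
    (p : Ω → ℝ) (X : Ω → α) (a : α) : ℝ :=
  ∑ ω ∈ Finset.univ.filter fun ω => X ω = a, p ω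

section Helpers

set_option linter.unusedSectionVars false

variable {Ω α β γ : Type*} [Fintype Ω] [Fintype α] [Fintype β] [Fintype γ]
  [DecidableEq α] [DecidableEq β] [DecidableEq γ] {p : Ω → ℝ}

lemma entH_eq (X : Ω → α) : entH p X = ∑ a : α, Real.negMulLog (pr p X a) := by
  simp [entH, pr, Real.negMulLog, neg_mul, Finset.sum_neg_distrib]

lemma pr_nonneg (hp : ∀ ω, 0 ≤ p ω) (X : Ω → α) (a : α) : 0 ≤ pr p X a :=
  Finset.sum_nonneg fun ω _ => hp ω

lemma pr_sum (hp1 : ∑ ω, p ω = 1) (X : Ω → α) : ∑ a : α, pr p X a = 1 := by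
  rw [← hp1]; exact Finset.sum_fiberwise _ _ _

lemma pr_map (X : Ω → α) (f : α → β) (b : β) :
    pr p (fun ω => f (X ω)) b = ∑ a ∈ Finset.univ.filter (fun a => f a = b), pr p X a := by
  have key := Finset.sum_fiberwise_of_maps_to
      (s := Finset.univ.filter fun ω => f (X ω) = b)
      (t := Finset.univ.filter fun a => f a = b) (g := X)
      (fun ω hω => by simp only [Finset.mem_filter, Finset.mem_univ, true_and] at hω ⊢; exact hω) p
  rw [pr, ← key]
  refine Finset.sum_congr rfl fun a ha => ?_
  simp only [Finset.mem_filter, Finset.mem_univ, true_and] at ha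
  rw [pr]
  congr 1
  ext ω
  simp only [Finset.mem_filter, Finset.mem_univ, true_and]
  exact ⟨And.right, fun h => ⟨by rw [h, ha], h⟩⟩

lemma pr_le_map (hp : ∀ ω, 0 ≤ p ω) (X : Ω → α) (f : α → β) (a : α) :
    pr p X a ≤ pr p (fun ω => f (X ω)) (f a) := by
  refine Finset.sum_le_sum_of_subset_of_nonneg ?_ fun ω _ _ => hp ω
  intro ω hω
  simp only [Finset.mem_filter, Finset.mem_univ, true_and] at hω ⊢
  rw [hω]

lemma sum_pr_mul (X : Ω → α) (f : α → β) (h : β → ℝ) :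
    ∑ b : β, pr p (fun ω => f (X ω)) b * h b = ∑ a : α, pr p X a * h (f a) := by
  calc ∑ b : β, pr p (fun ω => f (X ω)) b * h b
      = ∑ b : β, ∑ a ∈ Finset.univ.filter (fun a => f a = b), pr p X a * h (f a) := by
        refine Finset.sum_congr rfl fun b _ => ?_
        rw [pr_map, Finset.sum_mul]
        refine Finset.sum_congr rfl fun a ha => ?_
        simp only [Finset.mem_filter, Finset.mem_univ, true_and] at ha
        rw [ha]
    _ = ∑ a : α, pr p X a * h (f a) := Finset.sum_fiberwise _ _ _

lemma negMulLog_sum_le {ι : Type*} (s : Finset ι) (g : ι → ℝ) (hg : ∀ i ∈ s, 0 ≤ g i) :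
    Real.negMulLog (∑ i ∈ s, g i) ≤ ∑ i ∈ s, Real.negMulLog (g i) := by
  have hle : ∀ i ∈ s, g i ≤ ∑ j ∈ s, g j := fun i hi => Finset.single_le_sum hg hi
  calc Real.negMulLog (∑ i ∈ s, g i)
      = ∑ i ∈ s, -(g i * Real.log (∑ j ∈ s, g j)) := by
        rw [Real.negMulLog, neg_mul, Finset.sum_neg_distrib, Finset.sum_mul]
    _ ≤ ∑ i ∈ s, Real.negMulLog (g i) := by
        refine Finset.sum_le_sum fun i hi => ?_
        rw [Real.negMulLog, neg_mul, neg_le_neg_iff]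
        rcases eq_or_lt_of_le (hg i hi) with h0 | hpos
        · simp [← h0]
        · exact mul_le_mul_of_nonneg_left (Real.log_le_log hpos (hle i hi)) (hg i hi)

/-- Merging (applying any function) decreases entropy. -/
lemma entH_map_le (hp : ∀ ω, 0 ≤ p ω) (X : Ω → α) (f : α → β) :
    entH p (fun ω => f (X ω)) ≤ entH p X := by
  rw [entH_eq, entH_eq]
  calc ∑ b : β, Real.negMulLog (pr p (fun ω => f (X ω)) b)
      = ∑ b : β, Real.negMulLog (∑ a ∈ Finset.univ.filter (fun a => f a = b), pr p X a) :=
        Finset.sum_congr rfl fun b _ => by rw [pr_map]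
    _ ≤ ∑ b : β, ∑ a ∈ Finset.univ.filter (fun a => f a = b), Real.negMulLog (pr p X a) :=
        Finset.sum_le_sum fun b _ => negMulLog_sum_le _ _ fun a _ => pr_nonneg hp X a
    _ = ∑ a : α, Real.negMulLog (pr p X a) := Finset.sum_fiberwise _ _ _

lemma pr_marg_left (X : Ω → α) (Y : Ω → β) (b : β) :
    ∑ a : α, pr p (fun ω => (X ω, Y ω)) (a, b) = pr p Y b := by
  have key := Finset.sum_fiberwise (Finset.univ.filter fun ω => Y ω = b) X p
  rw [pr, ← key]
  refine Finset.sum_congr rfl fun a _ => ?_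
  rw [pr]
  congr 1
  ext ω
  simp only [Finset.mem_filter, Finset.mem_univ, true_and, Prod.mk.injEq]
  try tauto

lemma pr_marg_right (X : Ω → α) (Y : Ω → β) (a : α) :
    ∑ b : β, pr p (fun ω => (X ω, Y ω)) (a, b) = pr p X a := by
  have key := Finset.sum_fiberwise (Finset.univ.filter fun ω => X ω = a) Y p
  rw [pr, ← key]
  refine Finset.sum_congr rfl fun b _ => ?_
  rw [pr]
  congr 1
  ext ω
  simp only [Finset.mem_filter, Finset.mem_univ, true_and, Prod.mk.injEq]
  try tauto

lemma entH_comp_eq (X : Ω → α) (f : α → β) :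
    entH p (fun ω => f (X ω)) =
      ∑ a : α, pr p X a * -Real.log (pr p (fun ω => f (X ω)) (f a)) := by
  rw [entH_eq]
  rw [show (∑ b : β, Real.negMulLog (pr p (fun ω => f (X ω)) b)) =
      ∑ b : β, pr p (fun ω => f (X ω)) b * -Real.log (pr p (fun ω => f (X ω)) b) from
    Finset.sum_congr rfl fun b _ => by rw [Real.negMulLog]; ring]
  exact sum_pr_mul X f fun b => -Real.log (pr p (fun ω => f (X ω)) b)

/-- The pointwise log-sum inequality used in submodularity. -/
lemma pointwise_bound {r s t u : ℝ} (hr : 0 ≤ r) (hs : 0 ≤ s) (ht : 0 ≤ t) (hu : 0 ≤ u)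
    (hrs : r ≤ s) (hrt : r ≤ t) (hru : r ≤ u) :
    r - s * t / u ≤ r * (Real.log r + Real.log u - Real.log s - Real.log t) := by
  rcases eq_or_lt_of_le hr with h0 | hrpos
  · rw [← h0]
    have : 0 ≤ s * t / u := div_nonneg (mul_nonneg hs ht) hu
    simp only [zero_mul, zero_sub]
    linarith
  · have hspos : 0 < s := lt_of_lt_of_le hrpos hrs
    have htpos : 0 < t := lt_of_lt_of_le hrpos hrt
    have hupos : 0 < u := lt_of_lt_of_le hrpos hru
    have hapos : 0 < s * t / u := by positivity
    have h1 : Real.log (s * t / u / r) ≤ s * t / u / r - 1 :=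
      Real.log_le_sub_one_of_pos (by positivity)
    have h2 : Real.log (s * t / u / r) =
        Real.log s + Real.log t - Real.log u - Real.log r := by
      rw [Real.log_div hapos.ne' hrpos.ne', Real.log_div (by positivity) hupos.ne',
        Real.log_mul hspos.ne' htpos.ne']
    have h3 : r * (Real.log s + Real.log t - Real.log u - Real.log r) ≤ s * t / u - r := by
      have hmul := mul_le_mul_of_nonneg_left h1 hr
      rw [h2] at hmul
      calc r * (Real.log s + Real.log t - Real.log u - Real.log r)
          ≤ r * (s * t / u / r - 1) := hmul
        _ = s * t / u - r := by field_simp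
    nlinarith [h3]

/-- Submodularity: `H(X,Y,Z) + H(Y) ≤ H(X,Y) + H(Y,Z)`. -/
lemma entH_submod (hp : ∀ ω, 0 ≤ p ω) (hp1 : ∑ ω, p ω = 1)
    (X : Ω → α) (Y : Ω → β) (Z : Ω → γ) :
    entH p (fun ω => (X ω, Y ω, Z ω)) + entH p Y ≤
      entH p (fun ω => (X ω, Y ω)) + entH p (fun ω => (Y ω, Z ω)) := by
  have hEs : entH p (fun ω => (X ω, Y ω)) = ∑ v : α × β × γ,
      pr p (fun ω => (X ω, Y ω, Z ω)) v *
        -Real.log (pr p (fun ω => (X ω, Y ω)) (v.1, v.2.1)) :=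
    entH_comp_eq (fun ω => (X ω, Y ω, Z ω)) (fun v => (v.1, v.2.1))
  have hEt : entH p (fun ω => (Y ω, Z ω)) = ∑ v : α × β × γ,
      pr p (fun ω => (X ω, Y ω, Z ω)) v *
        -Real.log (pr p (fun ω => (Y ω, Z ω)) v.2) :=
    entH_comp_eq (fun ω => (X ω, Y ω, Z ω)) (fun v => v.2)
  have hEu : entH p Y = ∑ v : α × β × γ,
      pr p (fun ω => (X ω, Y ω, Z ω)) v * -Real.log (pr p Y v.2.1) :=
    entH_comp_eq (fun ω => (X ω, Y ω, Z ω)) (fun v => v.2.1)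
  have hEr : entH p (fun ω => (X ω, Y ω, Z ω)) = ∑ v : α × β × γ,
      pr p (fun ω => (X ω, Y ω, Z ω)) v *
        -Real.log (pr p (fun ω => (X ω, Y ω, Z ω)) v) := by
    rw [entH_eq]
    exact Finset.sum_congr rfl fun v _ => by rw [Real.negMulLog]; ring
  -- pointwise bound
  have hpt : ∀ v : α × β × γ,
      pr p (fun ω => (X ω, Y ω, Z ω)) v -
        pr p (fun ω => (X ω, Y ω)) (v.1, v.2.1) *
          pr p (fun ω => (Y ω, Z ω)) v.2 / pr p Y v.2.1 ≤
      (pr p (fun ω => (X ω, Y ω, Z ω)) v *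
          -Real.log (pr p (fun ω => (X ω, Y ω)) (v.1, v.2.1)) +
        pr p (fun ω => (X ω, Y ω, Z ω)) v *
          -Real.log (pr p (fun ω => (Y ω, Z ω)) v.2)) -
      (pr p (fun ω => (X ω, Y ω, Z ω)) v *
          -Real.log (pr p (fun ω => (X ω, Y ω, Z ω)) v) +
        pr p (fun ω => (X ω, Y ω, Z ω)) v * -Real.log (pr p Y v.2.1)) := by
    intro v
    have hrs : pr p (fun ω => (X ω, Y ω, Z ω)) v ≤
        pr p (fun ω => (X ω, Y ω)) (v.1, v.2.1) :=
      pr_le_map hp (fun ω => (X ω, Y ω, Z ω)) (fun v => (v.1, v.2.1)) v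
    have hrt : pr p (fun ω => (X ω, Y ω, Z ω)) v ≤
        pr p (fun ω => (Y ω, Z ω)) v.2 :=
      pr_le_map hp (fun ω => (X ω, Y ω, Z ω)) (fun v => v.2) v
    have hru : pr p (fun ω => (X ω, Y ω, Z ω)) v ≤ pr p Y v.2.1 :=
      pr_le_map hp (fun ω => (X ω, Y ω, Z ω)) (fun v => v.2.1) v
    have hb := pointwise_bound (pr_nonneg hp _ _) (pr_nonneg hp _ _) (pr_nonneg hp _ _)
      (pr_nonneg hp _ _) hrs hrt hru
    nlinarith [hb]
  -- sum of s*t/u is at most 1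
  have hsum_stu : ∑ v : α × β × γ,
      pr p (fun ω => (X ω, Y ω)) (v.1, v.2.1) *
        pr p (fun ω => (Y ω, Z ω)) v.2 / pr p Y v.2.1 ≤ 1 := by
    have expand : ∑ v : α × β × γ,
        pr p (fun ω => (X ω, Y ω)) (v.1, v.2.1) *
          pr p (fun ω => (Y ω, Z ω)) v.2 / pr p Y v.2.1 =
        ∑ y : β, ∑ z : γ, ∑ x : α,
          pr p (fun ω => (X ω, Y ω)) (x, y) *
            pr p (fun ω => (Y ω, Z ω)) (y, z) / pr p Y y := by
      simp only [Fintype.sum_prod_type]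
      rw [Finset.sum_comm]
      exact Finset.sum_congr rfl fun y _ => Finset.sum_comm
    rw [expand]
    have step : ∀ y : β, ∑ z : γ, ∑ x : α,
        pr p (fun ω => (X ω, Y ω)) (x, y) *
          pr p (fun ω => (Y ω, Z ω)) (y, z) / pr p Y y ≤ pr p Y y := by
      intro y
      have hfactor : ∑ z : γ, ∑ x : α,
          pr p (fun ω => (X ω, Y ω)) (x, y) *
            pr p (fun ω => (Y ω, Z ω)) (y, z) / pr p Y y =
          (∑ x : α, pr p (fun ω => (X ω, Y ω)) (x, y)) *
            (∑ z : γ, pr p (fun ω => (Y ω, Z ω)) (y, z)) / pr p Y y := by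
        rw [Finset.sum_comm, Finset.sum_mul, Finset.sum_div]
        refine Finset.sum_congr rfl fun x _ => ?_
        rw [Finset.mul_sum, Finset.sum_div]
      rw [hfactor, pr_marg_left X Y y, pr_marg_right Y Z y]
      by_cases h : pr p Y y = 0
      · rw [h]; simp
      · rw [mul_div_assoc, div_self h, mul_one]
    calc ∑ y : β, ∑ z : γ, ∑ x : α,
          pr p (fun ω => (X ω, Y ω)) (x, y) *
            pr p (fun ω => (Y ω, Z ω)) (y, z) / pr p Y y
        ≤ ∑ y : β, pr p Y y := Finset.sum_le_sum fun y _ => step y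
      _ = 1 := pr_sum hp1 Y
  have hsum_r : ∑ v : α × β × γ, pr p (fun ω => (X ω, Y ω, Z ω)) v = 1 :=
    pr_sum hp1 (fun ω => (X ω, Y ω, Z ω))
  have key : ∑ v : α × β × γ,
      (pr p (fun ω => (X ω, Y ω, Z ω)) v -
        pr p (fun ω => (X ω, Y ω)) (v.1, v.2.1) *
          pr p (fun ω => (Y ω, Z ω)) v.2 / pr p Y v.2.1) ≤
      (entH p (fun ω => (X ω, Y ω)) + entH p (fun ω => (Y ω, Z ω))) -
        (entH p (fun ω => (X ω, Y ω, Z ω)) + entH p Y) := by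
    rw [hEs, hEt, hEu, hEr, ← Finset.sum_add_distrib, ← Finset.sum_add_distrib,
      ← Finset.sum_sub_distrib]
    exact Finset.sum_le_sum fun v _ => hpt v
  rw [Finset.sum_sub_distrib, hsum_r] at key
  linarith

lemma entH_indep (hp1 : ∑ ω, p ω = 1) (X : Ω → α) (Y : Ω → β) (h : Indep2 p X Y) :
    entH p (fun ω => (X ω, Y ω)) = entH p X + entH p Y := by
  have hpr : ∀ a b, pr p (fun ω => (X ω, Y ω)) (a, b) = pr p X a * pr p Y b := by
    intro a b
    simp only [pr]
    rw [← h a b]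
    congr 1
    ext ω
    simp only [Finset.mem_filter, Finset.mem_univ, true_and, Prod.mk.injEq]
  rw [entH_eq (p := p) (fun ω => (X ω, Y ω)), entH_eq X, entH_eq Y, Fintype.sum_prod_type]
  calc ∑ a : α, ∑ b : β, Real.negMulLog (pr p (fun ω => (X ω, Y ω)) (a, b))
      = ∑ a : α, ∑ b : β,
          (pr p Y b * Real.negMulLog (pr p X a) + pr p X a * Real.negMulLog (pr p Y b)) := by
        refine Finset.sum_congr rfl fun a _ => Finset.sum_congr rfl fun b _ => ?_
        rw [hpr, Real.negMulLog_mul]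
    _ = ∑ a : α, (Real.negMulLog (pr p X a) * ∑ b : β, pr p Y b
          + pr p X a * ∑ b : β, Real.negMulLog (pr p Y b)) := by
        refine Finset.sum_congr rfl fun a _ => ?_
        rw [Finset.sum_add_distrib, ← Finset.sum_mul, ← Finset.mul_sum, mul_comm]
    _ = ∑ a : α, (Real.negMulLog (pr p X a)
          + pr p X a * ∑ b : β, Real.negMulLog (pr p Y b)) := by
        rw [pr_sum hp1]; simp
    _ = (∑ a : α, Real.negMulLog (pr p X a))
          + (∑ a : α, pr p X a) * ∑ b : β, Real.negMulLog (pr p Y b) := by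
        rw [Finset.sum_add_distrib, ← Finset.sum_mul]
    _ = (∑ a : α, Real.negMulLog (pr p X a)) + ∑ b : β, Real.negMulLog (pr p Y b) := by
        rw [pr_sum hp1, one_mul]

end Helpers

/-- with `S⁻, S⁺` independent, `H(S⁻) = c₁·H(𝒮)`, `H(S⁺) = c₂·H(𝒮)`,
`H(S⁻ | X*) = 0`, `H(S⁻, S⁺ | X⁻, X*) = 0` and `H(X⁻ | S⁻) ≤ (d' − c₁)·H(𝒮)`,
we get `H(X*) ≥ (2c₁ + c₂ − d')·H(𝒮)`. -/
theorem stmt16 {Ω α β γ δ : Type*} [Fintype Ω] [Fintype α] [Fintype β] [Fintype γ] [Fintype δ]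
    [DecidableEq α] [DecidableEq β] [DecidableEq γ] [DecidableEq δ]
    (p : Ω → ℝ) (hp : ∀ ω, 0 ≤ p ω) (hp1 : ∑ ω, p ω = 1)
    (Sm : Ω → α) (Sp : Ω → β) (Xm : Ω → γ) (Xs : Ω → δ)
    (hS c₁ c₂ d' : ℝ) (hc₁ : 0 ≤ c₁) (hc₂ : 0 ≤ c₂) (hd' : 0 ≤ d')
    (hindep : Indep2 p Sm Sp)
    (hHSm : entH p Sm = c₁ * hS)
    (hHSp : entH p Sp = c₂ * hS)
    (hdec1 : condH p Sm Xs = 0)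
    (hdec2 : condH p (fun ω => (Sm ω, Sp ω)) (fun ω => (Xm ω, Xs ω)) = 0)
    (hXm : condH p Xm Sm ≤ (d' - c₁) * hS) :
    entH p Xs ≥ (2 * c₁ + c₂ - d') * hS := by
  have h1 : entH p (fun ω => (Sm ω, Sp ω)) = c₁ * hS + c₂ * hS := by
    rw [entH_indep hp1 Sm Sp hindep, hHSm, hHSp]
  have h2 : entH p (fun ω => (Sm ω, Sp ω)) ≤
      entH p (fun ω => ((Sm ω, Sp ω), (Xm ω, Xs ω))) :=
    entH_map_le hp (fun ω => ((Sm ω, Sp ω), (Xm ω, Xs ω))) Prod.fst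
  have h3 : entH p (fun ω => ((Sm ω, Sp ω), (Xm ω, Xs ω))) = entH p (fun ω => (Xm ω, Xs ω)) := by
    have h := hdec2
    rw [condH] at h
    linarith
  have h4 : entH p (fun ω => (Xm ω, Xs ω)) ≤ entH p (fun ω => (Xm ω, Sm ω, Xs ω)) :=
    entH_map_le hp (fun ω => (Xm ω, Sm ω, Xs ω)) (fun v => (v.1, v.2.2))
  have h5 : entH p (fun ω => (Xm ω, Sm ω, Xs ω)) + entH p Sm ≤
      entH p (fun ω => (Xm ω, Sm ω)) + entH p (fun ω => (Sm ω, Xs ω)) :=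
    entH_submod hp hp1 Xm Sm Xs
  have h6 : entH p (fun ω => (Sm ω, Xs ω)) = entH p Xs := by
    have h := hdec1
    rw [condH] at h
    linarith
  have h7 : entH p (fun ω => (Xm ω, Sm ω)) ≤ entH p Sm + (d' - c₁) * hS := by
    have h := hXm
    rw [condH] at h
    linarith
  nlinarith [h1, h2, h3, h4, h5, h6, h7, hHSm]
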